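/- The polynomial P_{N−1} satisfies the boundary identities: for every integer k with 0 ≤ k ≤ N−2, P_{N−1}^{(k)}(0) − e^{−α}·P_{N−1}^{(k)}(1) = 0, and for k = N−1, P_{N−1}^{(N−1)}(0) − e^{−α}·P_{N−1}^{(N−1)}(1) = 1, where P^{(k)} denotes the k-th derivative of the polynomial P. -/

import Mathlib

open Polynomial Finset

lemma eval_iter_deriv (N : ℕ) (b : ℕ → ℝ) (k : ℕ) (x : ℝ) :
    (Polynomial.derivative^[k] (∑ j ∈ Finset.range N,
      Polynomial.C (b j / (Nat.factorial j : ℝ)) * Polynomial.X ^ j)).eval x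
    = ∑ j ∈ Finset.range N,
        b j / (Nat.factorial j : ℝ) * ((j.descFactorial k : ℝ) * x ^ (j - k)) := by
  rw [Polynomial.iterate_derivative_sum, Polynomial.eval_finset_sum]
  refine Finset.sum_congr rfl fun j _ => ?_
  rw [Polynomial.iterate_derivative_C_mul, Polynomial.iterate_derivative_X_pow_eq_C_mul]
  simp [mul_assoc]

lemma eval0_iter (N : ℕ) (b : ℕ → ℝ) (k : ℕ) (hk : k < N) :
    (Polynomial.derivative^[k] (∑ j ∈ Finset.range N,
      Polynomial.C (b j / (Nat.factorial j : ℝ)) * Polynomial.X ^ j)).eval 0 = b k := by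
  rw [eval_iter_deriv]
  rw [Finset.sum_eq_single k]
  · simp [Nat.descFactorial_self, Nat.factorial_ne_zero,
      div_mul_cancel₀, mul_comm]
    field_simp
  · intro j _ hj
    rcases lt_or_gt_of_ne hj with h | h
    · simp [Nat.descFactorial_eq_zero_iff_lt.2 h]
    · have : j - k ≠ 0 := by omega
      simp [zero_pow this]
  · intro h; exact absurd (Finset.mem_range.2 hk) h

lemma eval1_iter (N : ℕ) (b : ℕ → ℝ) (k : ℕ) (hk : k < N) :
    (Polynomial.derivative^[k] (∑ j ∈ Finset.range N,
      Polynomial.C (b j / (Nat.factorial j : ℝ)) * Polynomial.X ^ j)).eval 1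
    = ∑ i ∈ Finset.range (N - k), b (k + i) / (Nat.factorial i : ℝ) := by
  rw [eval_iter_deriv]
  have hsub : Finset.Ico k N ⊆ Finset.range N := by
    intro x hx; simp only [Finset.mem_Ico] at hx; simp only [Finset.mem_range]; omega
  rw [← Finset.sum_subset hsub ?van]
  case van =>
    intro j hj hj'
    have : j < k := by
      simp only [Finset.mem_range] at hj
      simp only [Finset.mem_Ico] at hj'
      omega
    simp [Nat.descFactorial_eq_zero_iff_lt.2 this]
  rw [Finset.sum_Ico_eq_sum_range]
  refine Finset.sum_congr rfl fun i _ => ?_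
  have hfac : (Nat.factorial i : ℝ) * ((k + i).descFactorial k : ℝ) = (Nat.factorial (k + i) : ℝ) := by
    rw [← Nat.cast_mul]
    norm_cast
    have := Nat.factorial_mul_descFactorial (n := k + i) (k := k) (by omega)
    simpa using this
  have h1 : (Nat.factorial (k+i) : ℝ) ≠ 0 := by positivity
  have h2 : (Nat.factorial i : ℝ) ≠ 0 := by positivity
  rw [one_pow, mul_one]
  field_simp
  rw [← hfac]; ring

/-- With `α > 0`, `N ≥ 1`, `b` defined by the recursion
`b (N−1) = 1/(1 − e^{−α})`, `b (N−k) = A·Σ_{i=1}^{k−1} b (N−k+i)/i!` for `2 ≤ k ≤ N`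
(where `A = e^{−α}/(1 − e^{−α})`), and `P = Σ_{k<N} (b k/k!)·X^k`, the polynomial `P`
satisfies the boundary identities:
for every `k ≤ N−2`, `P^{(k)}(0) − e^{−α}·P^{(k)}(1) = 0`, and
`P^{(N−1)}(0) − e^{−α}·P^{(N−1)}(1) = 1`. -/
theorem boundary_identities_exponential_spline_polynomial
    (α : ℝ) (hα : 0 < α) (N : ℕ) (hN : 1 ≤ N)
    (b : ℕ → ℝ)
    (hb_top : b (N - 1) = 1 / (1 - Real.exp (-α)))
    (hb_rec : ∀ k, 2 ≤ k → k ≤ N →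
      b (N - k) = Real.exp (-α) / (1 - Real.exp (-α)) *
        ∑ i ∈ Finset.Icc 1 (k - 1), b (N - k + i) / (Nat.factorial i : ℝ))
    (P : Polynomial ℝ)
    (hP : P = ∑ k ∈ Finset.range N,
      Polynomial.C (b k / (Nat.factorial k : ℝ)) * Polynomial.X ^ k) :
    (∀ k : ℕ, k + 2 ≤ N →
        (Polynomial.derivative^[k] P).eval 0
          - Real.exp (-α) * (Polynomial.derivative^[k] P).eval 1 = 0)
      ∧ (Polynomial.derivative^[N - 1] P).eval 0
          - Real.exp (-α) * (Polynomial.derivative^[N - 1] P).eval 1 = 1 := by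
  subst hP
  have he1 : Real.exp (-α) < 1 := Real.exp_lt_one_iff.2 (by linarith)
  have hne : 1 - Real.exp (-α) ≠ 0 := by linarith
  constructor
  · intro k hkN
    rw [eval0_iter N b k (by omega), eval1_iter N b k (by omega)]
    set m := N - k with hm
    have hrec := hb_rec m (by omega) (by omega)
    have hNm : N - m = k := by omega
    rw [hNm] at hrec
    have hsum : ∑ i ∈ Finset.range (N - k), b (k + i) / (Nat.factorial i : ℝ)
        = b k + ∑ i ∈ Finset.Icc 1 (m - 1), b (k + i) / (Nat.factorial i : ℝ) := by
      have h1 : N - k = (m - 1) + 1 := by omega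
      rw [h1, Finset.sum_range_succ']
      have h2 : Finset.Icc 1 (m - 1) = Finset.Ico 1 ((m - 1) + 1) := by
        rw [Finset.Ico_add_one_right_eq_Icc]
      rw [h2, Finset.sum_Ico_eq_sum_range]
      simp [add_comm, add_left_comm]
    rw [hsum, hrec]
    field_simp
    ring
  · have hN1 : N - 1 < N := by omega
    rw [eval0_iter N b (N - 1) hN1, eval1_iter N b (N - 1) hN1]
    have h1 : N - (N - 1) = 1 := by omega
    rw [h1, Finset.sum_range_one]
    simp only [Nat.add_zero, Nat.factorial_zero, Nat.cast_one, div_one]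
    rw [hb_top]
    field_simp
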